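/- Let p be an odd prime. A function F : 𝔽_p → 𝔽_p is planar if and only if there exist a, b, c ∈ 𝔽_p with a ≠ 0 such that F(x) = a·x² + b·x + c for all x ∈ 𝔽_p. -/

import Mathlib

open Finset Polynomial

/-- A function on a (finite) field is *planar* if for every nonzero `α` the map
`x ↦ f (x + α) - f x - f α` is a bijection. -/
def IsPlanar {K : Type*} [Ring K] (f : K → K) : Prop :=
  ∀ α : K, α ≠ 0 → Function.Bijective fun x => f (x + α) - f x - f α

namespace PlanarAux

variable {p : ℕ} [hpF : Fact p.Prime]

lemma sum_pow_ge_one (e : ℕ) (he : 1 ≤ e) :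
    ∑ x : ZMod p, x ^ e = if (p - 1) ∣ e then (-1 : ZMod p) else 0 := by
  have hp := hpF.out
  have hp1 : 1 ≤ p - 1 := by have := hp.two_le; omega
  have hcard : Fintype.card (ZMod p) = p := ZMod.card p
  -- drop x = 0
  have h0 : ∑ x : ZMod p, x ^ e = ∑ x ∈ Finset.univ.erase (0 : ZMod p), x ^ e := by
    rw [← Finset.sum_erase_add _ _ (Finset.mem_univ (0 : ZMod p))]
    rw [zero_pow (by omega), add_zero]
  set r := e % (p - 1) with hr
  have hxe : ∀ x : ZMod p, x ≠ 0 → x ^ e = x ^ r := by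
    intro x hx
    conv_lhs => rw [show e = (p-1) * (e / (p-1)) + r by rw [hr, Nat.div_add_mod]]
    rw [pow_add, pow_mul, ZMod.pow_card_sub_one_eq_one hx, one_pow, one_mul]
  rw [h0, Finset.sum_congr rfl (fun x hx => hxe x (Finset.ne_of_mem_erase hx))]
  have hdvd : (p - 1) ∣ e ↔ r = 0 := by rw [hr, Nat.dvd_iff_mod_eq_zero]
  by_cases hr0 : r = 0
  · rw [if_pos (hdvd.mpr hr0), hr0]
    simp only [pow_zero, Finset.sum_const, nsmul_eq_mul, mul_one]
    rw [Finset.card_erase_of_mem (Finset.mem_univ _), Finset.card_univ, hcard]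
    have : ((p - 1 : ℕ) : ZMod p) = (p : ZMod p) - 1 := by
      push_cast [Nat.cast_sub hp.one_le]; ring
    rw [this, ZMod.natCast_self, zero_sub]
  · rw [if_neg (fun h => hr0 (hdvd.mp h))]
    have hrlt : r < p - 1 := Nat.mod_lt _ (by omega)
    have : ∑ x ∈ Finset.univ.erase (0 : ZMod p), x ^ r = ∑ x : ZMod p, x ^ r := by
      rw [← Finset.sum_erase_add _ _ (Finset.mem_univ (0 : ZMod p))]
      rw [zero_pow (by omega), add_zero]
    rw [this]
    have := FiniteField.sum_pow_lt_card_sub_one (ZMod p) r (by rw [hcard]; exact hrlt)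
    exact this

lemma sum_pow_le (k : ℕ) (hk : k ≤ p - 1) :
    ∑ x : ZMod p, x ^ k = if k = p - 1 then (-1 : ZMod p) else 0 := by
  have hp := hpF.out
  rcases Nat.eq_zero_or_pos k with hk0 | hk1
  · subst hk0
    rw [if_neg (by have := hp.two_le; omega)]
    simp only [pow_zero, Finset.sum_const, Finset.card_univ, ZMod.card, nsmul_eq_mul, mul_one,
      ZMod.natCast_self]
  · rw [sum_pow_ge_one k hk1]
    congr 1
    rw [eq_iff_iff]
    constructor
    · rintro ⟨t, ht⟩
      have h1 : 1 ≤ p - 1 := by have := hp.two_le; omega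
      have ht1 : t = 1 := by
        by_contra hne
        rcases Nat.lt_or_ge t 2 with h | h
        · obtain rfl : t = 0 := by omega
          rw [mul_zero] at ht; omega
        · have := Nat.mul_le_mul_left (p-1) h; omega
      subst ht1; rw [mul_one] at ht; omega
    · rintro rfl; exact dvd_refl _


lemma choose_cast_ne_zero {k j : ℕ} (hj : j ≤ k) (hk : k ≤ p - 1) :
    ((k.choose j : ℕ) : ZMod p) ≠ 0 := by
  have hp := hpF.out
  intro h
  rw [ZMod.natCast_eq_zero_iff] at h
  have hdvd : p ∣ k.factorial := by
    rw [← Nat.choose_mul_factorial_mul_factorial hj]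
    exact Dvd.dvd.mul_right (Dvd.dvd.mul_right h _) _
  rw [Nat.Prime.dvd_factorial hp] at hdvd
  have := hp.two_le
  omega

/-- orthogonality extraction of coefficients from vanishing polynomial values -/
lemma coeff_extract {R : ℕ} (hR : R ≤ p - 2) (b : ℕ → ZMod p)
    (h : ∀ s : ZMod p, ∑ j ∈ Finset.range (R+1), b j * s ^ j = 0) :
    ∀ j₀, j₀ ≤ R → b j₀ = 0 := by
  have hp := hpF.out
  have hp2 := hp.two_le
  intro j₀ hj₀
  have h2 : ∑ s : ZMod p, (∑ j ∈ Finset.range (R+1), b j * s ^ j) * s ^ (p-1-j₀) = 0 := by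
    simp only [h, zero_mul, Finset.sum_const_zero]
  have h3 : ∀ s : ZMod p, (∑ j ∈ Finset.range (R+1), b j * s ^ j) * s ^ (p-1-j₀)
      = ∑ j ∈ Finset.range (R+1), b j * s ^ (j + (p-1-j₀)) := by
    intro s
    rw [Finset.sum_mul]
    exact Finset.sum_congr rfl fun j _ => by rw [pow_add, mul_assoc]
  rw [Finset.sum_congr rfl fun s _ => h3 s, Finset.sum_comm] at h2
  have h4 : ∀ j ∈ Finset.range (R+1),
      ∑ s : ZMod p, b j * s ^ (j + (p-1-j₀)) = if j = j₀ then - b j₀ else 0 := by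
    intro j hj
    rw [Finset.mem_range] at hj
    rw [← Finset.mul_sum, sum_pow_ge_one _ (by omega)]
    have : (p - 1) ∣ (j + (p-1-j₀)) ↔ j = j₀ := by
      constructor
      · rintro ⟨t, ht⟩
        have ht1 : t = 1 := by
          by_contra hne
          rcases Nat.lt_or_ge t 2 with hlt | hge
          · obtain rfl : t = 0 := by omega
            rw [mul_zero] at ht; omega
          · have := Nat.mul_le_mul_left (p-1) hge; omega
        subst ht1; rw [mul_one] at ht; omega
      · rintro rfl; exact ⟨1, by omega⟩
    by_cases hjj : j = j₀
    · rw [if_pos hjj, if_pos (this.mpr hjj), hjj]; ring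
    · rw [if_neg hjj, if_neg (fun hd => hjj (this.mp hd)), mul_zero]
  rw [Finset.sum_congr rfl h4, Finset.sum_ite_eq' _ j₀] at h2
  rw [if_pos (Finset.mem_range.mpr (by omega))] at h2
  exact neg_eq_zero.mp h2


lemma coeff_extract_sq (hp5 : 5 ≤ p) (c0 : ZMod p) (b : ℕ → ZMod p)
    (h : ∀ s : ZMod p, (∑ j ∈ Finset.range ((p-1)/2 + 1), b j * s ^ j) ^ 2 = c0) :
    ∀ j₀, 1 ≤ j₀ → j₀ ≤ (p-1)/2 → b j₀ = 0 := by
  have hp := hpF.out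
  have hodd : p % 2 = 1 := Nat.odd_iff.mp (hp.odd_of_ne_two (by omega))
  set m' := (p-1)/2 with hm'
  have hm2 : 2 * m' = p - 1 := by omega
  have key : ∀ e, 1 ≤ e → e ≤ p - 1 →
      ∑ j ∈ Finset.range (m'+1), ∑ k ∈ Finset.range (m'+1),
        (if j + k = e then b j * b k else 0) = 0 := by
    intro e he1 he2
    have hsum : ∑ s : ZMod p,
        (∑ j ∈ Finset.range (m'+1), b j * s ^ j) ^ 2 * s ^ (p-1-e)
        = c0 * (∑ s : ZMod p, s ^ (p-1-e)) := by
      rw [Finset.mul_sum]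
      exact Finset.sum_congr rfl fun s _ => by rw [h s]
    have hrhs : c0 * (∑ s : ZMod p, s ^ (p-1-e)) = 0 := by
      by_cases hie : e = p - 1
      · subst hie
        simp only [Nat.sub_self, pow_zero, Finset.sum_const, Finset.card_univ, ZMod.card,
          nsmul_eq_mul, mul_one, ZMod.natCast_self, mul_zero]
      · rw [sum_pow_ge_one (p-1-e) (by omega), if_neg, mul_zero]
        rintro ⟨t, ht⟩
        rcases Nat.lt_or_ge t 1 with hlt | hge
        · obtain rfl : t = 0 := by omega
          rw [mul_zero] at ht; omega
        · have := Nat.mul_le_mul_left (p-1) hge; omega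
    have hlhs : ∀ s : ZMod p,
        (∑ j ∈ Finset.range (m'+1), b j * s ^ j) ^ 2 * s ^ (p-1-e)
        = ∑ j ∈ Finset.range (m'+1), ∑ k ∈ Finset.range (m'+1),
            b j * b k * s ^ (j + k + (p-1-e)) := by
      intro s
      rw [pow_two, Finset.sum_mul_sum, Finset.sum_mul]
      refine Finset.sum_congr rfl fun j _ => ?_
      rw [Finset.sum_mul]
      refine Finset.sum_congr rfl fun k _ => ?_
      rw [pow_add, pow_add]; ring
    rw [Finset.sum_congr rfl fun s _ => hlhs s] at hsum
    rw [Finset.sum_comm] at hsum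
    have hswap : ∀ j ∈ Finset.range (m'+1),
        ∑ s : ZMod p, ∑ k ∈ Finset.range (m'+1), b j * b k * s ^ (j + k + (p-1-e))
        = ∑ k ∈ Finset.range (m'+1), (if j + k = e then - (b j * b k) else 0) := by
      intro j hj
      rw [Finset.sum_comm]
      refine Finset.sum_congr rfl fun k hk => ?_
      rw [Finset.mem_range] at hj hk
      rw [← Finset.mul_sum]
      by_cases hjk : j + k + (p-1-e) = 0
      · rw [if_neg (by omega), hjk]
        simp only [pow_zero, Finset.sum_const, Finset.card_univ, ZMod.card, nsmul_eq_mul,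
          mul_one, ZMod.natCast_self, mul_zero]
      · rw [sum_pow_ge_one _ (by omega)]
        have hdvd : (p - 1) ∣ (j + k + (p-1-e)) ↔ j + k = e := by
          constructor
          · rintro ⟨t, ht⟩
            have ht1 : t = 1 := by
              by_contra hne
              rcases Nat.lt_or_ge t 2 with hlt | hge
              · obtain rfl : t = 0 := by omega
                rw [mul_zero] at ht; omega
              · have := Nat.mul_le_mul_left (p-1) hge; omega
            subst ht1; rw [mul_one] at ht; omega
          · rintro hjke; exact ⟨1, by omega⟩
        by_cases hjke : j + k = e
        · rw [if_pos hjke, if_pos (hdvd.mpr hjke)]; ring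
        · rw [if_neg hjke, if_neg (fun hd => hjke (hdvd.mp hd)), mul_zero]
    rw [Finset.sum_congr rfl hswap] at hsum
    rw [hrhs] at hsum
    have : ∑ j ∈ Finset.range (m'+1), ∑ k ∈ Finset.range (m'+1),
        (if j + k = e then b j * b k else 0)
        = - ∑ j ∈ Finset.range (m'+1), ∑ k ∈ Finset.range (m'+1),
            (if j + k = e then - (b j * b k) else 0) := by
      rw [← Finset.sum_neg_distrib]
      refine Finset.sum_congr rfl fun j _ => ?_
      rw [← Finset.sum_neg_distrib]
      refine Finset.sum_congr rfl fun k _ => ?_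
      by_cases hjk : j + k = e
      · rw [if_pos hjk, if_pos hjk]; ring
      · rw [if_neg hjk, if_neg hjk]; ring
    rw [this, hsum, neg_zero]
  have step : ∀ j₀, 1 ≤ j₀ → j₀ ≤ m' → (∀ k, j₀ < k → k ≤ m' → b k = 0) → b j₀ = 0 := by
    intro j₀ h1 h2 ih
    have hk := key (2*j₀) (by omega) (by omega)
    have hcol : ∑ j ∈ Finset.range (m'+1), ∑ k ∈ Finset.range (m'+1),
        (if j + k = 2*j₀ then b j * b k else 0) = b j₀ * b j₀ := by
      rw [Finset.sum_eq_single j₀]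
      · rw [Finset.sum_eq_single j₀]
        · rw [if_pos (by omega)]
        · intro k _ hkne; rw [if_neg (by omega)]
        · intro habs; exact absurd (Finset.mem_range.mpr (by omega)) habs
      · intro j hj hjne
        apply Finset.sum_eq_zero; intro k hkr
        rw [Finset.mem_range] at hj hkr
        by_cases hjk : j + k = 2*j₀
        · rw [if_pos hjk]
          rcases Nat.lt_or_ge j j₀ with hlt | hge
          · rw [ih k (by omega) (by omega), mul_zero]
          · rw [ih j (by omega) (by omega), zero_mul]
        · rw [if_neg hjk]
      · intro habs; exact absurd (Finset.mem_range.mpr (by omega)) habs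
    rw [hcol] at hk
    exact mul_self_eq_zero.mp hk
  have all : ∀ t j₀, 1 ≤ j₀ → j₀ ≤ m' → m' ≤ j₀ + t → b j₀ = 0 := by
    intro t
    induction t with
    | zero =>
      intro j₀ h1 h2 h3
      exact step j₀ h1 h2 (fun k hk1 hk2 => absurd hk2 (by omega))
    | succ t ih =>
      intro j₀ h1 h2 h3
      exact step j₀ h1 h2 (fun k hk1 hk2 => ih k (by omega) hk2 (by omega))
  intro j₀ h1 h2
  exact all (m' - j₀) j₀ h1 h2 (by omega)


lemma cast_p_sub_one : ((p - 1 : ℕ) : ZMod p) = -1 := by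
  have hp := hpF.out
  have : ((p - 1 : ℕ) : ZMod p) = (p : ZMod p) - 1 := by
    push_cast [Nat.cast_sub hp.one_le]; ring
  rw [this, ZMod.natCast_self, zero_sub]

section Planar

variable {F : ZMod p → ZMod p}

lemma bij_shift (hF : ∀ α : ZMod p, α ≠ 0 → Function.Bijective fun x => F (x + α) - F x - F α)
    (s α : ZMod p) (hα : α ≠ 0) :
    Function.Bijective fun y : ZMod p => (F (y + α) + s * (y + α)) - (F y + s * y) := by
  have h1 : (fun y : ZMod p => (F (y + α) + s * (y + α)) - (F y + s * y))
      = (fun z : ZMod p => z + (F α + s * α)) ∘ (fun x => F (x + α) - F x - F α) := by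
    funext y; simp only [Function.comp_apply]; ring
  rw [h1]
  exact (Equiv.addRight (F α + s * α)).bijective.comp (hF α hα)

lemma double_sum_eq (hF : ∀ α : ZMod p, α ≠ 0 → Function.Bijective fun x => F (x + α) - F x - F α)
    (s : ZMod p) (k : ℕ) (hk1 : 1 ≤ k) (hk2 : k ≤ p - 1) :
    ∑ x : ZMod p, ∑ y : ZMod p, ((F x + s*x) - (F y + s*y)) ^ k
      = if k = p - 1 then 1 else 0 := by
  have hp := hpF.out
  set g : ZMod p → ZMod p := fun x => F x + s * x with hg
  have h1 : ∀ y : ZMod p, ∑ x : ZMod p, (g x - g y) ^ k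
      = ∑ α : ZMod p, (g (y + α) - g y) ^ k :=
    fun y => (Fintype.sum_equiv (Equiv.addLeft y)
      (fun α => (g (y + α) - g y) ^ k) (fun x => (g x - g y) ^ k)
      (fun α => by simp)).symm
  rw [Finset.sum_comm]
  rw [Finset.sum_congr rfl fun y _ => h1 y, Finset.sum_comm]
  have h2 : ∀ α ∈ Finset.univ.erase (0 : ZMod p),
      ∑ y : ZMod p, (g (y + α) - g y) ^ k = if k = p - 1 then (-1 : ZMod p) else 0 := by
    intro α hα
    rw [show (fun y : ZMod p => (g (y + α) - g y) ^ k)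
        = fun y : ZMod p => ((fun z : ZMod p =>
          (F (z + α) + s * (z + α)) - (F z + s * z)) y) ^ k from rfl]
    rw [(bij_shift hF s α (Finset.ne_of_mem_erase hα)).sum_comp (fun z => z ^ k)]
    exact sum_pow_le k hk2
  rw [← Finset.sum_erase_add _ _ (Finset.mem_univ (0 : ZMod p))]
  rw [Finset.sum_congr rfl h2]
  have h4 : ∑ y : ZMod p, (g (y + 0) - g y) ^ k = 0 := by
    have : ∀ y : ZMod p, (g (y + 0) - g y) ^ k = 0 := by
      intro y; rw [add_zero, sub_self, zero_pow (by omega : k ≠ 0)]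
    rw [Finset.sum_congr rfl fun y _ => this y, Finset.sum_const_zero]
  rw [h4, add_zero]
  rw [Finset.sum_const, Finset.card_erase_of_mem (Finset.mem_univ _), Finset.card_univ, ZMod.card]
  by_cases hkp : k = p - 1
  · rw [if_pos hkp, if_pos hkp, nsmul_eq_mul, cast_p_sub_one]; ring
  · rw [if_neg hkp, if_neg hkp, smul_zero]


/-- moments -/
noncomputable def Mo (F : ZMod p → ZMod p) (s : ZMod p) (r : ℕ) : ZMod p :=
  ∑ x : ZMod p, (F x + s * x) ^ r

/-- mixed moments -/
noncomputable def Am (F : ZMod p → ZMod p) (i j : ℕ) : ZMod p :=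
  ∑ x : ZMod p, (F x) ^ i * x ^ j

lemma Mo_exp_zero (s : ZMod p) : Mo F s 0 = 0 := by
  unfold Mo
  simp only [pow_zero, Finset.sum_const, Finset.card_univ, ZMod.card, nsmul_eq_mul, mul_one,
    ZMod.natCast_self]

lemma double_sum_binom (s : ZMod p) (k : ℕ) :
    ∑ x : ZMod p, ∑ y : ZMod p, ((F x + s*x) - (F y + s*y)) ^ k
    = ∑ m ∈ Finset.range (k+1),
        (Mo F s m) * ((-1 : ZMod p)^(k-m) * Mo F s (k-m)) * ((k.choose m : ℕ) : ZMod p) := by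
  have h1 : ∀ x y : ZMod p, ((F x + s*x) - (F y + s*y)) ^ k
      = ∑ m ∈ Finset.range (k+1),
          (F x + s*x)^m * ((-1 : ZMod p)^(k-m) * (F y + s*y)^(k-m)) * ((k.choose m : ℕ) : ZMod p) := by
    intro x y
    rw [sub_eq_add_neg, add_pow]
    refine Finset.sum_congr rfl fun m _ => ?_
    rw [neg_pow]
  rw [Finset.sum_congr rfl fun x _ =>
    (Finset.sum_congr rfl fun y (_ : y ∈ Finset.univ) => h1 x y)]
  rw [Finset.sum_congr rfl fun x (_ : x ∈ Finset.univ) => Finset.sum_comm, Finset.sum_comm]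
  refine Finset.sum_congr rfl fun m _ => ?_
  calc ∑ x : ZMod p, ∑ y : ZMod p,
        (F x + s*x)^m * ((-1 : ZMod p)^(k-m) * (F y + s*y)^(k-m)) * ((k.choose m : ℕ) : ZMod p)
      = ∑ x : ZMod p, ((F x + s*x)^m * ((-1 : ZMod p)^(k-m)) * ((k.choose m : ℕ) : ZMod p))
          * ∑ y : ZMod p, (F y + s*y)^(k-m) := by
        refine Finset.sum_congr rfl fun x _ => ?_
        rw [Finset.mul_sum]
        refine Finset.sum_congr rfl fun y _ => by ring
    _ = (∑ x : ZMod p, (F x + s*x)^m) * ((-1 : ZMod p)^(k-m)) * ((k.choose m : ℕ) : ZMod p)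
          * ∑ y : ZMod p, (F y + s*y)^(k-m) := by
        rw [← Finset.sum_mul, ← Finset.sum_mul, ← Finset.sum_mul]
    _ = (Mo F s m) * ((-1 : ZMod p)^(k-m) * Mo F s (k-m)) * ((k.choose m : ℕ) : ZMod p) := by
        unfold Mo; ring

lemma Mo_vanish (hF : ∀ α : ZMod p, α ≠ 0 → Function.Bijective fun x => F (x + α) - F x - F α)
    (s : ZMod p) : ∀ r, 1 ≤ r → 2*r ≤ p - 3 → Mo F s r = 0 := by
  have hp := hpF.out
  have hp2 := hp.two_le
  intro r
  induction r using Nat.strong_induction_on with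
  | _ r ih =>
    intro hr1 hr2
    have hE := double_sum_eq hF s (2*r) (by omega) (by omega)
    rw [double_sum_binom s (2*r), if_neg (by omega)] at hE
    rw [Finset.sum_eq_single r] at hE
    · rw [show 2*r - r = r by omega] at hE
      have hC : (((2*r).choose r : ℕ) : ZMod p) ≠ 0 :=
        choose_cast_ne_zero (by omega) (by omega)
      have hneg : ((-1 : ZMod p))^r ≠ 0 := pow_ne_zero _ (neg_ne_zero.mpr one_ne_zero)
      rcases mul_eq_zero.mp hE with h | h
      · rcases mul_eq_zero.mp h with h' | h'
        · exact h'
        · rcases mul_eq_zero.mp h' with h'' | h''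
          · exact absurd h'' hneg
          · exact h''
      · exact absurd h hC
    · intro m hm hne
      rw [Finset.mem_range] at hm
      rcases Nat.lt_or_ge m r with hlt | hge
      · rcases Nat.eq_zero_or_pos m with rfl | hm1
        · rw [Mo_exp_zero]; ring
        · rw [ih m hlt hm1 (by omega)]; ring
      · rcases Nat.eq_or_lt_of_le (show 2*r - m ≤ r by omega) with heq | hlt2
        · omega
        · rcases Nat.eq_zero_or_pos (2*r - m) with h0 | h1
          · rw [h0, Mo_exp_zero]; ring
          · rw [ih (2*r - m) hlt2 h1 (by omega)]; ring
    · intro habs; exact absurd (Finset.mem_range.mpr (by omega)) habs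

lemma Mo_half_sq (hF : ∀ α : ZMod p, α ≠ 0 → Function.Bijective fun x => F (x + α) - F x - F α)
    (hp5 : 5 ≤ p) (s : ZMod p) :
    (Mo F s ((p-1)/2))^2
      * ((-1 : ZMod p)^((p-1)/2) * (((p-1).choose ((p-1)/2) : ℕ) : ZMod p)) = 1 := by
  have hp := hpF.out
  have hodd : p % 2 = 1 := Nat.odd_iff.mp (hp.odd_of_ne_two (by omega))
  set m' := (p-1)/2 with hm'
  have hm2 : 2 * m' = p - 1 := by omega
  have hE := double_sum_eq hF s (p-1) (by omega) (by omega)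
  rw [double_sum_binom s (p-1), if_pos rfl] at hE
  rw [Finset.sum_eq_single m'] at hE
  · rw [show p - 1 - m' = m' by omega] at hE
    have hr : Mo F s m' ^ 2 * ((-1 : ZMod p)^m' * (((p-1).choose m' : ℕ) : ZMod p))
        = Mo F s m' * ((-1 : ZMod p)^m' * Mo F s m') * (((p-1).choose m' : ℕ) : ZMod p) := by
      ring
    exact hr.trans hE
  · intro m hm hne
    rw [Finset.mem_range] at hm
    rcases Nat.lt_or_ge m m' with hlt | hge
    · rcases Nat.eq_zero_or_pos m with rfl | hm1
      · rw [Mo_exp_zero]; ring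
      · rw [Mo_vanish hF s m hm1 (by omega)]; ring
    · rcases Nat.eq_zero_or_pos (p - 1 - m) with h0 | h1
      · rw [h0, Mo_exp_zero]; ring
      · rw [Mo_vanish hF s (p - 1 - m) h1 (by omega)]; ring
  · intro habs; exact absurd (Finset.mem_range.mpr (by omega)) habs

lemma Mo_expand (s : ZMod p) (r : ℕ) :
    Mo F s r = ∑ j ∈ Finset.range (r+1),
      (((r.choose j : ℕ) : ZMod p) * Am F (r-j) j) * s^j := by
  unfold Mo Am
  have h1 : ∀ x : ZMod p, (F x + s*x)^r
      = ∑ j ∈ Finset.range (r+1), (s*x)^j * (F x)^(r-j) * ((r.choose j : ℕ) : ZMod p) := by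
    intro x; rw [add_comm, add_pow]
  rw [Finset.sum_congr rfl fun x (_ : x ∈ Finset.univ) => h1 x, Finset.sum_comm]
  refine Finset.sum_congr rfl fun j _ => ?_
  calc ∑ x : ZMod p, (s*x)^j * (F x)^(r-j) * ((r.choose j : ℕ) : ZMod p)
      = ∑ x : ZMod p, (((r.choose j : ℕ) : ZMod p) * ((F x)^(r-j) * x^j)) * s^j := by
        refine Finset.sum_congr rfl fun x _ => by rw [mul_pow]; ring
    _ = (((r.choose j : ℕ) : ZMod p) * ∑ x : ZMod p, (F x)^(r-j) * x^j) * s^j := by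
        rw [← Finset.sum_mul, Finset.mul_sum]

lemma Am_vanish (hF : ∀ α : ZMod p, α ≠ 0 → Function.Bijective fun x => F (x + α) - F x - F α)
    (hp5 : 5 ≤ p) :
    ∀ i j, 1 ≤ i + j → (2*(i+j) ≤ p - 3 ∨ (2*(i+j) = p - 1 ∧ 1 ≤ j)) → Am F i j = 0 := by
  have hp := hpF.out
  intro i j h1 h2
  rcases h2 with h2 | ⟨h2, hj⟩
  · have hM : ∀ s : ZMod p, ∑ jj ∈ Finset.range ((i+j)+1),
        ((((i+j).choose jj : ℕ) : ZMod p) * Am F ((i+j)-jj) jj) * s^jj = 0 :=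
      fun s => by rw [← Mo_expand]; exact Mo_vanish hF s (i+j) h1 h2
    have hres := coeff_extract (R := i+j) (by omega) _ hM j (by omega)
    have hC : ((((i+j).choose j : ℕ)) : ZMod p) ≠ 0 :=
      choose_cast_ne_zero (by omega) (by omega)
    rcases mul_eq_zero.mp hres with h | h
    · exact absurd h hC
    · rw [show (i+j) - j = i by omega] at h; exact h
  · have hm' : i + j = (p-1)/2 := by
      have hodd : p % 2 = 1 := Nat.odd_iff.mp (hp.odd_of_ne_two (by omega))
      omega
    have hu : ((-1 : ZMod p)^((p-1)/2) * (((p-1).choose ((p-1)/2) : ℕ) : ZMod p)) ≠ 0 := by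
      apply mul_ne_zero
      · exact pow_ne_zero _ (neg_ne_zero.mpr one_ne_zero)
      · exact choose_cast_ne_zero (by omega) (by omega)
    set c0 : ZMod p := ((-1 : ZMod p)^((p-1)/2) * (((p-1).choose ((p-1)/2) : ℕ) : ZMod p))⁻¹
      with hc0
    have hsq : ∀ s : ZMod p, (∑ jj ∈ Finset.range ((p-1)/2+1),
        (((((p-1)/2).choose jj : ℕ) : ZMod p) * Am F ((p-1)/2 - jj) jj) * s^jj)^2 = c0 := by
      intro s
      rw [← Mo_expand]
      have h := Mo_half_sq hF hp5 s
      rw [hc0]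
      exact eq_inv_of_mul_eq_one_left h
    have hres := coeff_extract_sq hp5 c0 _ hsq j hj (by omega)
    have hC : (((((p-1)/2).choose j : ℕ)) : ZMod p) ≠ 0 :=
      choose_cast_ne_zero (by omega) (by omega)
    rcases mul_eq_zero.mp hres with h | h
    · exact absurd h hC
    · rw [show (p-1)/2 - j = i by omega] at h; exact h


lemma exists_index {n : ℕ} (hodd : p % 2 = 1) (h3 : 3 ≤ n) (hub : 2*n + 3 ≤ p) :
    ∃ i : ℕ, 1 ≤ i ∧ p - 1 ≤ 2*(i*(n-1)) ∧ i*n ≤ p - 2 := by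
  obtain ⟨k, rfl⟩ : ∃ k, n = k + 3 := ⟨n-3, by omega⟩
  obtain ⟨q, r, hdm, hrlt, hq2⟩ : ∃ q r, (k+3) * q + r = p - 2 ∧ r < k+3 ∧ 2 ≤ q :=
    ⟨(p-2)/(k+3), (p-2)%(k+3), Nat.div_add_mod _ _, Nat.mod_lt _ (by omega),
      (Nat.le_div_iff_mul_le (by omega)).mpr (by omega)⟩
  refine ⟨q, by omega, ?_, ?_⟩
  · have key : r + 1 ≤ q * (k+1) := by
      rcases Nat.eq_or_lt_of_le hq2 with hq | hq3
      · rcases Nat.eq_zero_or_pos k with rfl | hk1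
        · have h1 : (0+3) * q + r = p - 2 := hdm
          have h2 : q * (0+1) = q := by ring
          omega
        · have h2 : q * (k+1) = 2*(k+1) := by rw [← hq]
          omega
      · have h2 : 3 * (k+1) ≤ q * (k+1) := Nat.mul_le_mul_right _ hq3
        omega
    have e1 : q * (k+2) = q * (k+1) + q := by ring
    have e2 : (k+3) * q = q * (k+1) + 2*q := by ring
    have e3 : k+3-1 = k+2 := by omega
    rw [e3]
    omega
  · have h1 : q * (k+3) = (k+3) * q := by ring
    omega

lemma sum_eval (Q : Polynomial (ZMod p)) (hdeg : Q.natDegree ≤ p - 1) :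
    ∑ x : ZMod p, Q.eval x = - Q.coeff (p-1) := by
  have hp := hpF.out
  have hp2 := hp.two_le
  have hlt : Q.natDegree < p := by omega
  have h1 : ∀ x : ZMod p, Q.eval x = ∑ k ∈ Finset.range p, Q.coeff k * x ^ k :=
    fun x => Polynomial.eval_eq_sum_range' hlt x
  rw [Finset.sum_congr rfl fun x (_ : x ∈ Finset.univ) => h1 x, Finset.sum_comm]
  have h2 : ∀ k ∈ Finset.range p, ∑ x : ZMod p, Q.coeff k * x ^ k
      = if k = p - 1 then - Q.coeff (p-1) else 0 := by
    intro k hk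
    rw [Finset.mem_range] at hk
    rw [← Finset.mul_sum, sum_pow_le k (by omega)]
    by_cases hkp : k = p - 1
    · rw [if_pos hkp, if_pos hkp, hkp]; ring
    · rw [if_neg hkp, if_neg hkp, mul_zero]
  rw [Finset.sum_congr rfl h2, Finset.sum_ite_eq' _ (p-1),
    if_pos (Finset.mem_range.mpr (by omega))]

lemma forward (hodd : p % 2 = 1) {F : ZMod p → ZMod p}
    (hF : ∀ α : ZMod p, α ≠ 0 → Function.Bijective fun x => F (x + α) - F x - F α) :
    ∃ a b c : ZMod p, a ≠ 0 ∧ ∀ x, F x = a * x ^ 2 + b * x + c := by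
  have hp := hpF.out
  have hp2 := hp.two_le
  have hp3 : 3 ≤ p := by omega
  classical
  set P := Lagrange.interpolate Finset.univ id F with hP
  have hinj : Set.InjOn (id : ZMod p → ZMod p) ↑(Finset.univ : Finset (ZMod p)) :=
    Function.injective_id.injOn
  have heval : ∀ x : ZMod p, P.eval x = F x := fun x => by
    rw [hP]
    exact Lagrange.eval_interpolate_at_node F hinj (Finset.mem_univ x)
  have hdeg : P.natDegree ≤ p - 1 := by
    by_cases hP0 : P = 0
    · rw [hP0, Polynomial.natDegree_zero]; omega
    · have h1 := Lagrange.degree_interpolate_lt F hinj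
      rw [← hP, Finset.card_univ, ZMod.card] at h1
      have := (Polynomial.natDegree_lt_iff_degree_lt hP0).mpr h1
      omega
  have hn2 : P.natDegree ≤ 2 := by
    rcases Nat.lt_or_ge p 5 with hp5 | hp5
    · omega
    · have hA := Am_vanish hF hp5
      have hstep : ∀ j, j ≤ (p-3)/2 → P.natDegree ≤ p-1-j → P.natDegree ≤ p-2-j := by
        intro j hj hcur
        have hQdeg : (P * Polynomial.X ^ j).natDegree ≤ p - 1 := by
          refine le_trans (Polynomial.natDegree_mul_le) ?_
          rw [Polynomial.natDegree_X_pow]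
          omega
        have hsum := sum_eval (P * Polynomial.X ^ j) hQdeg
        have hAval : ∑ x : ZMod p, (P * Polynomial.X ^ j).eval x = Am F 1 j := by
          unfold Am
          refine Finset.sum_congr rfl fun x _ => ?_
          rw [Polynomial.eval_mul, Polynomial.eval_pow, Polynomial.eval_X, heval x, pow_one]
        have hAz : Am F 1 j = 0 := by
          apply hA 1 j (by omega)
          rcases Nat.lt_or_ge j ((p-3)/2) with hlt | hge
          · left; omega
          · right; exact ⟨by omega, by omega⟩
        have hco : (P * Polynomial.X ^ j).coeff (p-1) = 0 := by
          rw [hAval, hAz] at hsum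
          exact neg_eq_zero.mp hsum.symm
        rw [Polynomial.coeff_mul_X_pow', if_pos (by omega)] at hco
        rw [Polynomial.natDegree_le_iff_coeff_eq_zero]
        intro N hN
        by_cases hNe : N = p-1-j
        · rw [hNe]; exact hco
        · exact Polynomial.coeff_eq_zero_of_natDegree_lt (by omega)
      have hdown : ∀ j, j ≤ (p-3)/2 → P.natDegree ≤ p - 2 - j := by
        intro j
        induction j with
        | zero => intro _; have := hstep 0 (by omega) (by omega); omega
        | succ j ihj =>
          intro hjle
          have hprev := ihj (by omega)
          have := hstep (j+1) hjle (by omega)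
          omega
      have hhalf : P.natDegree ≤ (p-1)/2 := by
        have := hdown ((p-3)/2) le_rfl; omega
      by_contra hn3'
      obtain ⟨n, hnn⟩ : ∃ n, P.natDegree = n := ⟨_, rfl⟩
      rw [hnn] at hhalf
      have hn3 : 3 ≤ n := by omega
      have hPne : P ≠ 0 := by
        intro h0
        rw [h0, Polynomial.natDegree_zero] at hnn
        omega
      have hlc : P.coeff n ≠ 0 := by
        rw [← hnn, Polynomial.coeff_natDegree]
        exact Polynomial.leadingCoeff_ne_zero.mpr hPne
      rcases Nat.eq_or_lt_of_le hhalf with hcase | hcase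
      · -- n = (p-1)/2
        have h2n : 2*n = p - 1 := by omega
        have hp7 : 7 ≤ p := by omega
        have hAz := hA 2 0 (by omega) (by left; omega)
        have hQdeg : (P^2).natDegree ≤ p - 1 := by
          rw [Polynomial.natDegree_pow, hnn]; omega
        have hsum := sum_eval (P^2) hQdeg
        have hAval : ∑ x : ZMod p, (P^2).eval x = Am F 2 0 := by
          unfold Am
          refine Finset.sum_congr rfl fun x _ => ?_
          rw [Polynomial.eval_pow, heval x, pow_zero, mul_one]
        have hcoeff : (P^2).coeff (p-1) = P.coeff n * P.coeff n := by
          rw [pow_two, Polynomial.coeff_mul, Finset.sum_eq_single ((n : ℕ), (n : ℕ))]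
          · intro ab hab hne
            rw [Finset.HasAntidiagonal.mem_antidiagonal] at hab
            rcases Nat.lt_or_ge ab.1 n with hlt | hge
            · rw [Polynomial.coeff_eq_zero_of_natDegree_lt
                (show P.natDegree < ab.2 by omega), mul_zero]
            · have hgt : n < ab.1 := by
                rcases Nat.eq_or_lt_of_le hge with he | hlt2
                · exfalso; apply hne
                  have hb2 : ab.2 = n := by omega
                  exact Prod.ext he.symm hb2
                · exact hlt2
              rw [Polynomial.coeff_eq_zero_of_natDegree_lt (show P.natDegree < ab.1 by omega),
                zero_mul]
          · intro habs
            exact absurd (Finset.HasAntidiagonal.mem_antidiagonal.mpr (by omega)) habs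
        rw [hAval, hAz, hcoeff] at hsum
        exact hlc (mul_self_eq_zero.mp (neg_eq_zero.mp hsum.symm))
      · -- 3 ≤ n ≤ (p-3)/2
        have hub : 2*n + 3 ≤ p := by omega
        obtain ⟨i, hi1, hi2, hi3⟩ := exists_index hodd hn3 hub
        obtain ⟨j, hjdef⟩ : ∃ j, j = p - 1 - i*n := ⟨_, rfl⟩
        have emul : i*(n-1) + i = i*n := by
          rw [← Nat.mul_succ]
          congr 1
          omega
        have hj1 : 1 ≤ j := by omega
        have hij : 2*(i + j) ≤ p - 1 := by omega
        have hAz := hA i j (by omega) (by omega)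
        have hQdeg : (P^i * Polynomial.X ^ j).natDegree ≤ p-1 := by
          refine le_trans (Polynomial.natDegree_mul_le) ?_
          rw [Polynomial.natDegree_X_pow, Polynomial.natDegree_pow, hnn]
          omega
        have hsum := sum_eval (P^i * Polynomial.X ^ j) hQdeg
        have hAval : ∑ x : ZMod p, (P^i * Polynomial.X ^ j).eval x = Am F i j := by
          unfold Am
          refine Finset.sum_congr rfl fun x _ => ?_
          rw [Polynomial.eval_mul, Polynomial.eval_pow, Polynomial.eval_pow, Polynomial.eval_X,
            heval x]
        have hcoeff : (P^i * Polynomial.X ^ j).coeff (p-1) = P.coeff n ^ i := by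
          rw [Polynomial.coeff_mul_X_pow', if_pos (by omega)]
          have hin : p - 1 - j = i * n := by omega
          have hdg : (P^i).natDegree = i*n := by
            rw [Polynomial.natDegree_pow, hnn]
          rw [hin, ← hdg, Polynomial.coeff_natDegree, Polynomial.leadingCoeff_pow]
          rw [← hnn, Polynomial.coeff_natDegree]
        rw [hAval, hAz, hcoeff] at hsum
        have hz : P.coeff n ^ i = 0 := neg_eq_zero.mp hsum.symm
        exact pow_ne_zero i hlc hz
  -- conclude
  have hform : ∀ x : ZMod p, F x = P.coeff 2 * x^2 + P.coeff 1 * x + P.coeff 0 := by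
    intro x
    rw [← heval x, Polynomial.eval_eq_sum_range' (show P.natDegree < 3 by omega)]
    rw [Finset.sum_range_succ, Finset.sum_range_succ, Finset.sum_range_one]
    ring
  have ha : P.coeff 2 ≠ 0 := by
    intro h0
    have hD := hF 1 one_ne_zero
    have h01 : (0 : ZMod p) = 1 := by
      apply hD.1
      show F (0+1) - F 0 - F 1 = F (1+1) - F 1 - F 1
      simp only [hform, h0]
      ring
    exact zero_ne_one h01
  exact ⟨P.coeff 2, P.coeff 1, P.coeff 0, ha, hform⟩

end Planar
end PlanarAux


theorem stmt6 (p : ℕ) (hp : p.Prime) (hodd : Odd p) (F : ZMod p → ZMod p) :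
    IsPlanar F ↔ ∃ a b c : ZMod p, a ≠ 0 ∧ ∀ x, F x = a * x ^ 2 + b * x + c := by
  haveI : Fact p.Prime := ⟨hp⟩
  have hodd' : p % 2 = 1 := Nat.odd_iff.mp hodd
  constructor
  · intro hF
    exact PlanarAux.forward hodd' hF
  · rintro ⟨a, b, c, ha, hform⟩ α hα
    have h2 : (2 : ZMod p) ≠ 0 := by
      intro h
      rw [show (2 : ZMod p) = ((2 : ℕ) : ZMod p) by norm_num,
        ZMod.natCast_eq_zero_iff] at h
      have hle : p ≤ 2 := Nat.le_of_dvd (by norm_num) h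
      have hp2 : 2 ≤ p := hp.two_le
      omega
    have hk : 2*a*α ≠ 0 := mul_ne_zero (mul_ne_zero h2 ha) hα
    have hfun : (fun x => F (x + α) - F x - F α) = fun x : ZMod p => (2*a*α)*x - c := by
      funext x
      rw [hform, hform, hform]
      ring
    rw [hfun]
    constructor
    · intro x y hxy
      have hxy2 : (2*a*α)*x = (2*a*α)*y := by
        have := sub_left_inj.mp hxy
        exact this
      exact mul_left_cancel₀ hk hxy2
    · intro y
      refine ⟨(y + c) / (2*a*α), ?_⟩
      field_simp
      ring
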